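/- Let K be a CW-complex and P a Polish ANR that is homotopy equivalent to K. If Z is a normal space with Z ∈ α(K), then Z ∈ α(P); moreover, in this situation P is an absolute extensor for Z (i.e., every continuous map from a closed subset of Z to P extends continuously over Z). -/

import Mathlib

open Topology Set TopologicalSpace

universe u v

/-- `K` is an absolute extensor of `X`: every continuous map from a closed subset of `X`
into `K` extends continuously over `X`.  `eDimLe X K` means e-dim X ≤ K. -/
def eDimLe (X : Type u) [TopologicalSpace X] (K : Type v) [TopologicalSpace K] : Prop :=
  ∀ A : Set X, IsClosed A → ∀ f : C(A, K), ∃ F : C(X, K), ∀ a : A, F a = f a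

/-- `X` is an absolute extensor for `Z`. -/
def IsAbsExtensorOf (K : Type v) [TopologicalSpace K] (Z : Type u) [TopologicalSpace Z] : Prop :=
  ∀ A : Set Z, IsClosed A → ∀ f : C(A, K), ∃ F : C(Z, K), ∀ a : A, F a = f a

/-- The class α(K): every continuous map from a closed subset `A` of `Z` to `K` which extends
to a neighborhood of `A` extends over all of `Z`. -/
def InAlpha (K : Type v) [TopologicalSpace K] (Z : Type u) [TopologicalSpace Z] : Prop :=
  ∀ A : Set Z, IsClosed A → ∀ f : C(A, K),
    (∃ U : Set Z, IsOpen U ∧ A ⊆ U ∧ ∃ g : C(U, K),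
      ∀ a : A, ∀ hU : (a : Z) ∈ U, g ⟨a, hU⟩ = f a) →
    ∃ F : C(Z, K), ∀ a : A, F a = f a

/-- A continuous map `f : X → Y` is `K`-soft. -/
def IsKSoft {X : Type u} {Y : Type v} [TopologicalSpace X] [TopologicalSpace Y]
    (K : Type*) [TopologicalSpace K] (f : C(X, Y)) : Prop :=
  ∀ (Z : Type u) (_ : TopologicalSpace Z), NormalSpace Z → InAlpha K Z →
    ∀ Z₀ : Set Z, IsClosed Z₀ → ∀ (g : C(Z₀, X)) (h : C(Z, Y)),
      (∀ z : Z₀, f (g z) = h z) →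
      ∃ k : C(Z, X), (∀ z : Z₀, k z = g z) ∧ ∀ z : Z, f (k z) = h z

/-- The topology of `X` is induced by a complete metric. -/
def CompletelyMetrizable (X : Type u) [t : TopologicalSpace X] : Prop :=
  ∃ m : MetricSpace X, m.toUniformSpace.toTopologicalSpace = t ∧
    @CompleteSpace X m.toUniformSpace

/-- The weight of a topological space: the least cardinality of a base of its topology. -/
noncomputable def topWeight (X : Type u) [TopologicalSpace X] : Cardinal.{u} :=
  sInf { c | ∃ B : Set (Set X), IsTopologicalBasis B ∧ Cardinal.mk B = c }

/-- The Hilbert space `l₂(τ)` of weight `τ`. -/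
abbrev Hilbert (τ : Cardinal.{u}) : Type u := lp (fun _ : τ.out => ℝ) 2

/-- `K` is (homeomorphic to) a CW-complex. -/
def IsCWComplex (K : Type u) [TopologicalSpace K] : Prop :=
  ∃ (X : TopCat.{u}) (_ : TopCat.CWComplex X), Nonempty (X ≃ₜ K)

/-- `K` is (homeomorphic to) a countable CW-complex. -/
def IsCountableCWComplex (K : Type u) [TopologicalSpace K] : Prop :=
  ∃ (X : TopCat.{u}) (C : TopCat.CWComplex X), (∀ n : ℕ, Countable (C.attachCells n (not_isMax n)).ι) ∧
    Nonempty (X ≃ₜ K)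

/-- Two maps into `X` are `𝒰`-close for a family `𝒰` of subsets of `X`. -/
def UClose {X : Type u} {Z : Type v} (𝒰 : Set (Set X)) (g h : Z → X) : Prop :=
  ∀ z : Z, ∃ U ∈ 𝒰, g z ∈ U ∧ h z ∈ U

/-- `f : X → Y` is strongly `(K,τ)`-universal. -/
def StronglyUniversal {X : Type u} {Y : Type v} [TopologicalSpace X] [TopologicalSpace Y]
    (K : Type*) [TopologicalSpace K] (τ : Cardinal.{u}) (f : C(X, Y)) : Prop :=
  ∀ 𝒰 : Set (Set X), (∀ U ∈ 𝒰, IsOpen U) → ⋃₀ 𝒰 = univ →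
    ∀ (Z : Type u) (_ : TopologicalSpace Z), MetrizableSpace Z → topWeight Z ≤ τ →
      eDimLe Z K → ∀ g : C(Z, X),
        (∃ h : C(Z, X), IsEmbedding h ∧ UClose 𝒰 g h ∧ ∀ z : Z, f (h z) = f (g z)) ∧
        (CompletelyMetrizable Z →
          ∃ h : C(Z, X), IsClosedEmbedding h ∧ UClose 𝒰 g h ∧ ∀ z : Z, f (h z) = f (g z))

/-- A map between metrizable spaces is uniformly 0-dimensional. -/
def UniformlyZeroDimensional {X : Type u} {Y : Type v} [tX : TopologicalSpace X]
    [TopologicalSpace Y] (f : X → Y) : Prop :=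
  ∃ m : MetricSpace X, m.toUniformSpace.toTopologicalSpace = tX ∧
    ∀ ε : ℝ, 0 < ε → ∀ y ∈ Set.range f, ∃ U : Set Y, IsOpen U ∧ y ∈ U ∧
      ∃ 𝒱 : Set (Set X), (∀ V ∈ 𝒱, IsOpen V ∧ ∀ x ∈ V, ∀ x' ∈ V, m.dist x x' < ε) ∧
        𝒱.PairwiseDisjoint id ∧ f ⁻¹' U = ⋃₀ 𝒱


/-- `P` is an absolute neighborhood retract (equivalently, an absolute neighborhood
extensor for metrizable spaces). -/
def IsANR (P : Type u) [TopologicalSpace P] : Prop :=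
  ∀ (X : Type u) (_ : TopologicalSpace X), MetrizableSpace X → ∀ A : Set X, IsClosed A →
    ∀ f : C(A, P), ∃ U : Set X, IsOpen U ∧ A ⊆ U ∧ ∃ g : C(U, P),
      ∀ a : A, ∀ hU : (a : X) ∈ U, g ⟨a, hU⟩ = f a


section AuxProofs

open Metric ENNReal

lemma alpha_transfer {K : Type u} {P : Type u} [TopologicalSpace K] [TopologicalSpace P]
    (hhe : Nonempty (ContinuousMap.HomotopyEquiv K P))
    (Z : Type u) [TopologicalSpace Z] [NormalSpace Z] (hZ : InAlpha K Z) :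
    InAlpha P Z := by
  classical
  obtain ⟨he⟩ := hhe
  set φ : C(K, P) := he.toFun with hφ
  set ψ : C(P, K) := he.invFun with hψ
  obtain ⟨Θ⟩ := he.right_inv
  rintro A hA f ⟨U, hU, hAU, g, hg⟩
  -- shrink
  obtain ⟨V, hV, hAV, hVU⟩ := normal_exists_closure_subset hA hU hAU
  set B : Set Z := closure V with hB
  have hBU : B ⊆ U := hVU
  have hVB : V ⊆ B := subset_closure
  -- Urysohn function
  obtain ⟨lam, hlam0, hlam1, hlam01⟩ :=
    exists_continuous_zero_one_of_isClosed (hV.isClosed_compl) hA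
      (disjoint_compl_left_iff.2 hAV)
  set lam' : Z → unitInterval := fun z => ⟨lam z, hlam01 z⟩ with hlam'
  have hlam'c : Continuous lam' := (map_continuous lam).subtype_mk _
  -- extend ψ ∘ g over Z using hZ
  set incl : C(B, U) := ⟨Set.inclusion hBU, continuous_inclusion hBU⟩ with hincl
  set gB : C(B, K) := ψ.comp (g.comp incl) with hgB
  obtain ⟨G, hG⟩ := hZ B isClosed_closure gB
    ⟨U, hU, hBU, ψ.comp g, fun a hU' => rfl⟩
  -- glue
  set f₁ : Z → P := fun z => if h : z ∈ U then Θ (lam' z, g ⟨z, h⟩) else φ (G z) with hf₁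
  have hf₁U : ContinuousOn f₁ U := by
    rw [continuousOn_iff_continuous_restrict]
    have hres : (U.domRestrict f₁) = fun u : U => Θ (lam' u, g u) := by
      funext u; simp only [Set.domRestrict, f₁, u.2, dif_pos]
    rw [hres]
    exact Θ.continuous.comp
      (((hlam'c.comp continuous_subtype_val).prodMk (map_continuous g)))
  have hf₁B : ContinuousOn f₁ B := hf₁U.mono hBU
  have hf₂ : Continuous fun z => φ (G z) := (map_continuous φ).comp (map_continuous G)
  have hfrontier : ∀ z ∈ frontier B, f₁ z = φ (G z) := by
    intro z hz
    have hzB : z ∈ B := isClosed_closure.frontier_subset hz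
    have hzU : z ∈ U := hBU hzB
    have hzV : z ∉ V := by
      intro hzV
      exact hz.2 (interior_mono hVB (hV.subset_interior_iff.2 Subset.rfl hzV))
    have hlz : lam' z = 0 := by
      apply Subtype.ext
      simpa [lam'] using hlam0 (by simpa using hzV)
    have h0 : f₁ z = Θ (0, g ⟨z, hzU⟩) := by
      simp only [f₁, hzU, dif_pos, hlz]
    rw [h0, Θ.apply_zero]
    have := hG ⟨z, hzB⟩
    simp only [gB, ContinuousMap.comp_apply] at this
    simp only [ContinuousMap.comp_apply]
    rw [this]
    rfl
  have hclosB : closure B = B := isClosed_closure.closure_eq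
  have hcont : Continuous (B.piecewise f₁ fun z => φ (G z)) := by
    exact continuous_piecewise hfrontier (by rw [hclosB]; exact hf₁B) hf₂.continuousOn
  refine ⟨⟨B.piecewise f₁ fun z => φ (G z), hcont⟩, ?_⟩
  intro a
  have haB : (a : Z) ∈ B := hVB (hAV a.2)
  have haU : (a : Z) ∈ U := hBU haB
  have hla : lam' (a : Z) = 1 := by
    apply Subtype.ext
    simpa [lam'] using hlam1 a.2
  simp only [ContinuousMap.coe_mk, Set.piecewise, haB, if_pos]
  simp only [f₁, haU, dif_pos, hla, Θ.apply_one]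
  exact hg a haU


lemma polish_closedEmbedding (P : Type u) [TopologicalSpace P] (hP : PolishSpace P)
    [Nonempty P] :
    ∃ Φ : P → ((ℕ → ℝ) × (ℕ → ℝ)), Topology.IsEmbedding Φ ∧ IsClosed (range Φ) := by
  classical
  letI := upgradeIsCompletelyMetrizable P
  obtain ⟨x, hx⟩ := TopologicalSpace.exists_dense_seq P
  set e : P → (ℕ → ℝ) := fun p n => dist p (x n) with he
  have hec : Continuous e := continuous_pi fun n => continuous_id.dist continuous_const
  have hkey : ∀ (p : P) (ε : ℝ), 0 < ε → ∃ n, ∀ z : P, |e z n - e p n| < ε / 3 →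
      dist z p < ε := by
    intro p ε hε
    obtain ⟨n, hn⟩ : ∃ n, dist p (x n) < ε / 3 := by
      have hp : p ∈ closure (range x) := hx p
      rw [Metric.mem_closure_range_iff] at hp
      exact hp (ε / 3) (by linarith)
    refine ⟨n, fun z hz => ?_⟩
    have h2 : dist z (x n) < dist p (x n) + ε / 3 := by
      have := (abs_sub_lt_iff.1 hz).1
      simp only [e] at this
      linarith
    calc dist z p ≤ dist z (x n) + dist (x n) p := dist_triangle _ _ _
    _ = dist z (x n) + dist p (x n) := by rw [dist_comm (x n) p]
    _ < ε := by linarith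
  have heinj : Function.Injective e := by
    intro p q hpq
    by_contra hne
    have hd : 0 < dist p q := dist_pos.2 hne
    obtain ⟨n, hn⟩ := hkey p (dist p q) hd
    have := hn q (by rw [hpq]; simpa using (by positivity : (0:ℝ) < dist p q / 3))
    rw [dist_comm] at this
    exact lt_irrefl _ this
  have hind : Topology.IsInducing e := by
    rw [Topology.isInducing_iff_nhds]
    intro p
    refine le_antisymm ((hec.tendsto p).le_comap) ?_
    rw [(Metric.nhds_basis_ball (x := p)).ge_iff]
    intro ε hε
    obtain ⟨n, hn⟩ := hkey p ε hε
    refine Filter.mem_comap.2 ⟨(fun y => y n) ⁻¹' (Metric.ball (e p n) (ε / 3)), ?_, ?_⟩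
    · exact (continuous_apply n).continuousAt.preimage_mem_nhds
        (Metric.ball_mem_nhds _ (by linarith))
    · intro z hz
      refine hn z ?_
      simpa [Real.dist_eq] using hz
  have hemb : Topology.IsEmbedding e := ⟨hind, heinj⟩
  -- the G-delta sets
  set Uop : ℕ → Set (ℕ → ℝ) := fun n =>
    {y | ∃ V : Set (ℕ → ℝ), IsOpen V ∧ y ∈ V ∧
      EMetric.diam (e ⁻¹' V) ≤ ENNReal.ofReal (1 / (n + 1))} with hUop
  have hUopen : ∀ n, IsOpen (Uop n) := by
    intro n
    rw [isOpen_iff_mem_nhds]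
    rintro y ⟨V, hVo, hyV, hVd⟩
    exact Filter.mem_of_superset (hVo.mem_nhds hyV) fun z hz => ⟨V, hVo, hz, hVd⟩
  have hran : ∀ n, range e ⊆ Uop n := by
    rintro n _ ⟨p, rfl⟩
    set r : ℝ := 1 / (3 * (n + 1)) with hr
    have hrpos : 0 < r := by positivity
    have hball : Metric.ball p r ∈ 𝓝 p := Metric.ball_mem_nhds _ hrpos
    rw [hind.nhds_eq_comap, Filter.mem_comap] at hball
    obtain ⟨t, ht, hsub⟩ := hball
    obtain ⟨V, hVt, hVo, hyV⟩ := mem_nhds_iff.1 ht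
    refine ⟨V, hVo, hyV, ?_⟩
    apply EMetric.diam_le
    intro a ha b hb
    have ha' : a ∈ Metric.ball p r := hsub (hVt ha)
    have hb' : b ∈ Metric.ball p r := hsub (hVt hb)
    rw [edist_dist]
    apply ENNReal.ofReal_le_ofReal
    have htri : dist a b ≤ dist a p + dist p b := dist_triangle _ _ _
    rw [Metric.mem_ball] at ha' hb'
    rw [dist_comm p b] at htri
    have hrle : 2 * r ≤ 1 / (n + 1) := by
      have h1 : (0:ℝ) < (n:ℝ) + 1 := by positivity
      rw [hr, mul_one_div, div_le_div_iff₀ (by positivity) h1]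
      nlinarith
    linarith
  -- completeness: closure ∩ ⋂ U n ⊆ range e
  have hcomplete : ∀ y ∈ closure (range e), (∀ n, y ∈ Uop n) → y ∈ range e := by
    intro y hyc hyU
    obtain ⟨ys, hys, hyt⟩ := mem_closure_iff_seq_limit.1 hyc
    choose p hp using hys
    have hcau : CauchySeq p := by
      rw [EMetric.cauchySeq_iff]
      intro ε hε
      obtain ⟨n, hn⟩ := ENNReal.exists_inv_nat_lt (ne_of_gt hε)
      have hlt : ENNReal.ofReal (1 / (n + 1)) < ε := by
        refine lt_of_le_of_lt ?_ hn
        have h1 : ENNReal.ofReal (1 / ((n:ℝ) + 1)) = (((n+1:ℕ)) : ℝ≥0∞)⁻¹ := by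
          rw [one_div, ENNReal.ofReal_inv_of_pos (by positivity)]
          congr 1
          rw [show ((n:ℝ) + 1) = ((n+1 : ℕ) : ℝ) by push_cast; ring, ENNReal.ofReal_natCast]
        rw [h1]
        exact ENNReal.inv_le_inv' (by exact_mod_cast Nat.le_succ n)
      obtain ⟨V, hVo, hyV, hVd⟩ := hyU n
      obtain ⟨N, hN⟩ := (Filter.tendsto_atTop'.1 hyt V (hVo.mem_nhds hyV))
      refine ⟨N, fun m hm k hk => ?_⟩
      have hmV : p m ∈ e ⁻¹' V := by simp only [mem_preimage, hp]; exact hN m hm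
      have hkV : p k ∈ e ⁻¹' V := by simp only [mem_preimage, hp]; exact hN k hk
      calc edist (p m) (p k) ≤ EMetric.diam (e ⁻¹' V) := EMetric.edist_le_diam_of_mem hmV hkV
      _ ≤ ENNReal.ofReal (1 / (n + 1)) := hVd
      _ < ε := hlt
    obtain ⟨q, hq⟩ := cauchySeq_tendsto_of_complete hcau
    refine ⟨q, ?_⟩
    have : Filter.Tendsto (fun k => e (p k)) Filter.atTop (𝓝 (e q)) :=
      (hec.tendsto q).comp hq
    simp only [hp] at this
    exact tendsto_nhds_unique this hyt
  letI : MetricSpace (ℕ → ℝ) := PiCountable.metricSpace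
  have hpos : ∀ (n : ℕ) (hne : ((Uop n)ᶜ).Nonempty) (y : ℕ → ℝ), y ∈ Uop n →
      0 < infDist y ((Uop n)ᶜ) := by
    intro n hne y hy
    exact ((hUopen n).isClosed_compl.notMem_iff_infDist_pos hne).1 (by simpa using hy)
  set Φ : P → ((ℕ → ℝ) × (ℕ → ℝ)) :=
    fun p => (e p, fun n => (infDist (e p) ((Uop n)ᶜ))⁻¹) with hΦ
  have hΦc : Continuous Φ := by
    refine hec.prodMk (continuous_pi fun n => ?_)
    by_cases hne : ((Uop n)ᶜ).Nonempty
    · have hcU : ContinuousOn (fun y : ℕ → ℝ => (infDist y ((Uop n)ᶜ))⁻¹) (Uop n) := by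
        apply ContinuousOn.inv₀ (continuous_infDist_pt _).continuousOn
        intro y hy
        exact ne_of_gt (hpos n hne y hy)
      exact hcU.comp_continuous hec (fun p => hran n ⟨p, rfl⟩)
    · have h0 : ((Uop n)ᶜ) = ∅ := not_nonempty_iff_eq_empty.1 hne
      simp only [h0, infDist_empty]
      exact continuous_const
  have hΦemb : Topology.IsEmbedding Φ :=
    Topology.IsEmbedding.of_comp hΦc continuous_fst hemb
  have hseq : IsSeqClosed (range Φ) := by
    intro zs z hmem htend
    choose p hp using hmem
    have htf : Filter.Tendsto (fun k => e (p k)) Filter.atTop (𝓝 z.1) := by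
      have h1 := (continuous_fst.tendsto z).comp htend
      have heq : (Prod.fst ∘ zs) = fun k => e (p k) := by
        funext k
        show (zs k).1 = e (p k)
        rw [← hp k]
      rwa [heq] at h1
    have hts : ∀ n, Filter.Tendsto (fun k => (infDist (e (p k)) ((Uop n)ᶜ))⁻¹)
        Filter.atTop (𝓝 (z.2 n)) := by
      intro n
      have := ((continuous_apply n).comp continuous_snd).tendsto z |>.comp htend
      have heq : (fun k => (infDist (e (p k)) ((Uop n)ᶜ))⁻¹)
          = fun k => ((zs k).2 n) := by
        funext k; rw [← hp k]
      rw [heq]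
      exact this
    have hz1c : z.1 ∈ closure (range e) :=
      mem_closure_of_tendsto htf (Filter.Eventually.of_forall fun k => ⟨p k, rfl⟩)
    have hz1U : ∀ n, z.1 ∈ Uop n := by
      intro n
      by_contra hzn
      have hne : ((Uop n)ᶜ).Nonempty := ⟨z.1, hzn⟩
      have hd0 : Filter.Tendsto (fun k => infDist (e (p k)) ((Uop n)ᶜ))
          Filter.atTop (𝓝 0) := by
        have hcont := (continuous_infDist_pt ((Uop n)ᶜ)).tendsto z.1 |>.comp htf
        rwa [infDist_zero_of_mem (by simpa using hzn)] at hcont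
      have hdpos : ∀ k, 0 < infDist (e (p k)) ((Uop n)ᶜ) :=
        fun k => hpos n hne _ (hran n ⟨p k, rfl⟩)
      have hat : Filter.Tendsto (fun k => (infDist (e (p k)) ((Uop n)ᶜ))⁻¹)
          Filter.atTop Filter.atTop := by
        apply Filter.Tendsto.comp tendsto_inv_nhdsGT_zero
        rw [tendsto_nhdsWithin_iff]
        exact ⟨hd0, Filter.Eventually.of_forall fun k => hdpos k⟩
      exact not_tendsto_nhds_of_tendsto_atTop hat (z.2 n) (hts n)
    obtain ⟨q, hq⟩ := hcomplete z.1 hz1c hz1U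
    have hsnd : ∀ n, z.2 n = (infDist (e q) ((Uop n)ᶜ))⁻¹ := by
      intro n
      by_cases hne : ((Uop n)ᶜ).Nonempty
      · have hc : 0 < infDist (e q) ((Uop n)ᶜ) :=
          hpos n hne _ (hq ▸ hz1U n)
        have : Filter.Tendsto (fun k => (infDist (e (p k)) ((Uop n)ᶜ))⁻¹)
            Filter.atTop (𝓝 ((infDist (e q) ((Uop n)ᶜ))⁻¹)) := by
          apply Filter.Tendsto.inv₀ _ (ne_of_gt hc)
          have := (continuous_infDist_pt ((Uop n)ᶜ)).tendsto z.1 |>.comp htf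
          rwa [← hq] at this
        exact tendsto_nhds_unique (hts n) this
      · have h0 : ((Uop n)ᶜ) = ∅ := not_nonempty_iff_eq_empty.1 hne
        have : Filter.Tendsto (fun k => (infDist (e (p k)) ((Uop n)ᶜ))⁻¹)
            Filter.atTop (𝓝 ((infDist (e q) ((Uop n)ᶜ))⁻¹)) := by
          simp only [h0, infDist_empty]
          exact tendsto_const_nhds
        exact tendsto_nhds_unique (hts n) this
    have hzq : z = Φ q := by
      apply Prod.ext
      · exact hq.symm
      · funext n; exact hsnd n
    exact ⟨q, hzq.symm⟩


  exact ⟨Φ, hΦemb, hseq.isClosed⟩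


lemma nbhd_extension (P : Type u) [TopologicalSpace P] (hP : PolishSpace P) (hANR : IsANR P)
    (Z : Type u) [TopologicalSpace Z] [NormalSpace Z] (A : Set Z) (hA : IsClosed A)
    (f : C(A, P)) :
    ∃ U : Set Z, IsOpen U ∧ A ⊆ U ∧ ∃ g : C(U, P),
      ∀ a : A, ∀ hU : (a : Z) ∈ U, g ⟨a, hU⟩ = f a := by
  classical
  rcases isEmpty_or_nonempty P with hPe | hPn
  · haveI : IsEmpty A := ⟨fun a => IsEmpty.false (f a)⟩
    have hAe : A = ∅ := by
      ext a
      simp only [Set.mem_empty_iff_false, iff_false]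
      intro ha
      exact IsEmpty.false (⟨a, ha⟩ : A)
    refine ⟨∅, isOpen_empty, by simp [hAe], ⟨⟨fun a => absurd a.2 (Set.notMem_empty a), ?_⟩, ?_⟩⟩
    · refine continuous_def.2 fun s _ => ?_
      rw [Set.eq_empty_of_isEmpty (_ ⁻¹' s)]
      exact isOpen_empty
    · intro a
      exact absurd (hAe ▸ a.2) (Set.notMem_empty (a : Z))
  · obtain ⟨Φ, hΦemb, hΦcl⟩ := polish_closedEmbedding P hP
    set ΦC : C(P, (ℕ → ℝ) × (ℕ → ℝ)) := ⟨Φ, hΦemb.continuous⟩ with hΦC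
    obtain ⟨F, hF⟩ := ContinuousMap.exists_restrict_eq hA (ΦC.comp f)
    have hFa : ∀ a : A, F (a : Z) = Φ (f a) := by
      intro a
      have := ContinuousMap.congr_fun hF a
      simpa [ΦC] using this
    haveI : MetrizableSpace (ULift.{u} ((ℕ → ℝ) × (ℕ → ℝ))) :=
      Topology.IsEmbedding.uliftDown.metrizableSpace
    set A' : Set (ULift.{u} ((ℕ → ℝ) × (ℕ → ℝ))) := ULift.down ⁻¹' (range Φ) with hA'def
    have hA'cl : IsClosed A' := hΦcl.preimage continuous_uliftDown
    set homeo : P ≃ₜ Set.range Φ := hΦemb.toHomeomorph with hhomeo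
    have hmemA' : ∀ a : A', (a : ULift.{u} ((ℕ → ℝ) × (ℕ → ℝ))).down ∈ range Φ :=
      fun a => a.2
    set f' : C(A', P) :=
      ⟨fun a => homeo.symm ⟨(a : ULift.{u} ((ℕ → ℝ) × (ℕ → ℝ))).down, hmemA' a⟩,
        homeo.symm.continuous.comp ((continuous_uliftDown.comp
          continuous_subtype_val).subtype_mk _)⟩ with hf'
    obtain ⟨U', hU'o, hA'U', g', hg'⟩ :=
      hANR (ULift.{u} ((ℕ → ℝ) × (ℕ → ℝ))) inferInstance inferInstance A' hA'cl f'
    refine ⟨(fun z => ULift.up (F z)) ⁻¹' U',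
      hU'o.preimage (continuous_uliftUp.comp F.continuous), ?_, ?_⟩
    · intro a ha
      have : ULift.up (F a) ∈ A' := by
        simp only [A', Set.mem_preimage, ULift.down_up]
        exact ⟨f ⟨a, ha⟩, (hFa ⟨a, ha⟩).symm⟩
      exact hA'U' this
    · refine ⟨⟨fun u => g' ⟨ULift.up (F (u : Z)), u.2⟩,
        g'.continuous.comp (((continuous_uliftUp.comp F.continuous).comp
          continuous_subtype_val).subtype_mk _)⟩, ?_⟩
      intro a hU
      have hmem : ULift.up (F (a : Z)) ∈ A' := by
        simp only [A', Set.mem_preimage, ULift.down_up]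
        exact ⟨f a, (hFa a).symm⟩
      have hkey := hg' ⟨ULift.up (F (a : Z)), hmem⟩ hU
      simp only [ContinuousMap.coe_mk] at hkey ⊢
      rw [hkey]
      simp only [f', ContinuousMap.coe_mk]
      have hx : (⟨((ULift.up (F (a : Z))) : ULift.{u} ((ℕ → ℝ) × (ℕ → ℝ))).down,
          hmemA' ⟨ULift.up (F (a : Z)), hmem⟩⟩ : Set.range Φ) = homeo (f a) := by
        apply Subtype.ext
        simp only [ULift.down_up]
        rw [hFa a]
        simp only [homeo, Topology.IsEmbedding.toHomeomorph, Equiv.ofInjective]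
        rfl
      rw [hx, Homeomorph.symm_apply_apply]

end AuxProofs

theorem statement3 (K P : Type u) [TopologicalSpace K] [TopologicalSpace P]
    (hK : IsCWComplex K) (hP : PolishSpace P) (hANR : IsANR P)
    (hhe : Nonempty (ContinuousMap.HomotopyEquiv K P))
    (Z : Type u) [TopologicalSpace Z] [NormalSpace Z] (hZ : InAlpha K Z) :
    InAlpha P Z ∧ IsAbsExtensorOf P Z := by
  have halpha : InAlpha P Z := alpha_transfer hhe Z hZ
  exact ⟨halpha, fun A hA f => halpha A hA f (nbhd_extension P hP hANR Z A hA f)⟩
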